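/- Let B be a complete Boolean algebra and μ a measure on B (a valuation that is continuous: μ(⨆ directed U_i) = sup μ(U_i)) which is locally finite. Then μ is faithful if and only if for all U ∈ B, μ(U) = 0 implies U = 0. -/

import Mathlib

open scoped ENNReal

theorem faithful_iff_null_eq_bot (B : Type*) [CompleteBooleanAlgebra B]
    (μ : B → ℝ≥0∞) (hmono : Monotone μ) (hbot : μ ⊥ = 0)
    (hmod : ∀ U V : B, μ U + μ V = μ (U ⊔ V) + μ (U ⊓ V))
    (hcont : ∀ {ι : Type*} (U : ι → B), Directed (· ≤ ·) U →
      μ (⨆ i, U i) = ⨆ i, μ (U i))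
    (hlocfin : ⊤ = sSup {U : B | μ U < ⊤}) :
    (∀ U V : B, U ≤ V → (∀ K : B, μ K < ⊤ → μ (U ⊓ K) = μ (V ⊓ K)) → U = V) ↔
    (∀ U : B, μ U = 0 → U = ⊥) := by
  constructor
  · intro hf U hU
    symm
    apply hf ⊥ U bot_le
    intro K hK
    have h1 : μ (U ⊓ K) = 0 :=
      le_antisymm ((hmono inf_le_left).trans hU.le) zero_le
    simp [hbot, h1]
  · intro hnull U V hUV h
    have hW : V ⊓ Uᶜ = ⊥ := by
      have heq : V ⊓ Uᶜ = (V ⊓ Uᶜ) ⊓ sSup {K : B | μ K < ⊤} := by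
        rw [← hlocfin, inf_top_eq]
      rw [heq, inf_sSup_eq]
      apply le_bot_iff.mp
      apply iSup_le; intro K; apply iSup_le; intro hK
      have h1 : (U ⊓ K) ⊔ (V ⊓ Uᶜ ⊓ K) = V ⊓ K := by
        rw [← inf_sup_right, sup_inf_left, sup_compl_eq_top, inf_top_eq,
          sup_eq_right.mpr hUV]
      have h2 : (U ⊓ K) ⊓ (V ⊓ Uᶜ ⊓ K) = ⊥ := by
        apply le_bot_iff.mp
        calc (U ⊓ K) ⊓ (V ⊓ Uᶜ ⊓ K) ≤ U ⊓ Uᶜ :=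
              inf_le_inf inf_le_left (inf_le_left.trans inf_le_right)
          _ ≤ ⊥ := inf_compl_eq_bot.le
      have key : μ (U ⊓ K) + μ (V ⊓ Uᶜ ⊓ K) = μ (V ⊓ K) := by
        rw [hmod, h1, h2, hbot, add_zero]
      have hfin : μ (U ⊓ K) ≠ ⊤ := ((hmono inf_le_right).trans_lt hK).ne
      have : μ (U ⊓ K) + μ (V ⊓ Uᶜ ⊓ K) = μ (U ⊓ K) + 0 := by
        rw [add_zero, key, h K hK]
      have hz : μ (V ⊓ Uᶜ ⊓ K) = 0 := by
        exact (ENNReal.add_right_inj hfin).mp this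
      exact (hnull _ hz).le
    have : V = (V ⊓ U) ⊔ (V ⊓ Uᶜ) := by
      rw [← inf_sup_left, sup_compl_eq_top, inf_top_eq]
    rw [hW, sup_bot_eq, inf_eq_right.mpr hUV] at this
    exact this.symm
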